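/- arXiv:1510.08656 — 2 statements merged into one kernel-verified Lean document; each statement's English description precedes it below -/
import Mathlib

section
/- For all x ∈ [0,1], one has 1 − H((1−x)/2) ≤ x²/(2·ln 2) + (1 − 1/(2·ln 2))·x⁴, where H is the binary entropy function. -/
noncomputable def binEnt (x : ℝ) : ℝ := -x * Real.logb 2 x - (1 - x) * Real.logb 2 (1 - x)

open Real Filter Topology

/-- The series term. -/
noncomputable def myB (n : ℕ) : ℝ := 1 / (((n : ℝ) + 1) * (2 * n + 1))

lemma myB_pos (n : ℕ) : 0 < myB n := by
  unfold myB; positivity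

lemma summable_myB : Summable myB := by
  have h2 : Summable (fun n : ℕ => 1 / ((n : ℝ) + 1) ^ 2) := by
    have := (summable_nat_add_iff (f := fun n : ℕ => 1 / (n : ℝ) ^ 2) 1).mpr
      (summable_one_div_nat_pow.mpr one_lt_two)
    simpa using this
  refine Summable.of_nonneg_of_le (fun n => (myB_pos n).le) (fun n => ?_) h2
  unfold myB
  have hn : (0:ℝ) < (n : ℝ) + 1 := by positivity
  rw [div_le_div_iff₀ (by positivity) (by positivity)]
  nlinarith [Nat.cast_nonneg (α := ℝ) n]

/-- Power series for the symmetric entropy-type function. -/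
lemma hasSum_myF {x : ℝ} (h : |x| < 1) :
    HasSum (fun n : ℕ => x ^ (2 * n + 2) * myB n)
      ((1 + x) * Real.log (1 + x) + (1 - x) * Real.log (1 - x)) := by
  have hx1 : 0 < 1 + x := by cases abs_lt.mp h; linarith
  have hx2 : 0 < 1 - x := by cases abs_lt.mp h; linarith
  have hxsq : |x ^ 2| < 1 := by
    rw [abs_pow, pow_two]
    calc |x| * |x| ≤ 1 * |x| := by gcongr
    _ < 1 := by simpa using h
  have h1 := (hasSum_log_sub_log_of_abs_lt_one h).mul_left x
  have h2 := hasSum_pow_div_log_of_abs_lt_one hxsq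
  have h3 := h1.sub h2
  have hterm : ∀ n : ℕ,
      x * (2 * (1 / (2 * (n:ℝ) + 1)) * x ^ (2 * n + 1)) - (x ^ 2) ^ (n + 1) / ((n:ℝ) + 1)
        = x ^ (2 * n + 2) * myB n := by
    intro n
    have hn : (0:ℝ) < (n : ℝ) + 1 := by positivity
    have h2n : (0:ℝ) < 2 * (n : ℝ) + 1 := by positivity
    have hp : (x ^ 2) ^ (n + 1) = x ^ (2 * n + 2) := by
      rw [← pow_mul]; ring_nf
    rw [hp]
    unfold myB
    field_simp
    ring
  have hsum : x * (Real.log (1 + x) - Real.log (1 - x)) - -Real.log (1 - x ^ 2)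
      = (1 + x) * Real.log (1 + x) + (1 - x) * Real.log (1 - x) := by
    have : (1 : ℝ) - x ^ 2 = (1 + x) * (1 - x) := by ring
    rw [this, Real.log_mul hx1.ne' hx2.ne']
    ring
  rw [← hsum]
  exact h3.congr_fun fun n => (hterm n).symm

lemma hasSum_myB : HasSum myB (2 * Real.log 2) := by
  have hS : HasSum myB (∑' n, myB n) := summable_myB.hasSum
  suffices hval : (∑' n, myB n) = 2 * Real.log 2 by rwa [hval] at hS
  set F : ℝ → ℝ := fun x => (1 + x) * Real.log (1 + x) + (1 - x) * Real.log (1 - x) with hF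
  -- limit of F at 1 from the left equals ∑' myB, by dominated convergence
  have hne : (𝓝[<] (1:ℝ)).NeBot := nhdsLT_neBot 1
  have h_dom : Tendsto F (𝓝[<] (1:ℝ)) (𝓝 (∑' n, myB n)) := by
    have h_tend : Tendsto (fun x : ℝ => ∑' n, x ^ (2 * n + 2) * myB n)
        (𝓝[<] (1:ℝ)) (𝓝 (∑' n, myB n)) := by
      refine tendsto_tsum_of_dominated_convergence (f := fun x (n : ℕ) => x ^ (2 * n + 2) * myB n)
        (g := myB) (bound := myB) summable_myB (fun k => ?_) ?_
      · have : Tendsto (fun x : ℝ => x ^ (2 * k + 2) * myB k) (𝓝 (1:ℝ))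
            (𝓝 ((1:ℝ) ^ (2 * k + 2) * myB k)) := by
          exact (continuous_pow _).tendsto 1 |>.mul_const _
        simpa using this.mono_left nhdsWithin_le_nhds
      · filter_upwards [Ioo_mem_nhdsLT_of_mem (by norm_num : (1:ℝ) ∈ Set.Ioc 0 1)] with y hy k
        have hy0 : 0 ≤ y := hy.1.le
        have hy1 : y ≤ 1 := hy.2.le
        rw [Real.norm_eq_abs, abs_mul, abs_of_nonneg (pow_nonneg hy0 _),
          abs_of_nonneg (myB_pos k).le]
        exact mul_le_of_le_one_left (myB_pos k).le (pow_le_one₀ hy0 hy1)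
    refine h_tend.congr' ?_
    filter_upwards [Ioo_mem_nhdsLT_of_mem (by norm_num : (1:ℝ) ∈ Set.Ioc 0 1)] with y hy
    have hy : |y| < 1 := abs_lt.mpr ⟨by linarith [hy.1], hy.2⟩
    exact ((hasSum_myF hy).tsum_eq)
  -- limit of F at 1 equals 2 log 2 by continuity
  have h_cont : Tendsto F (𝓝[<] (1:ℝ)) (𝓝 (2 * Real.log 2)) := by
    have t1 : Tendsto (fun x : ℝ => (1 + x) * Real.log (1 + x)) (𝓝 (1:ℝ))
        (𝓝 (2 * Real.log 2)) := by
      have hc : ContinuousAt (fun x : ℝ => (1 + x) * Real.log (1 + x)) 1 :=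
        (continuousAt_const.add continuousAt_id).mul
          ((Real.continuousAt_log (by norm_num)).comp (continuousAt_const.add continuousAt_id))
      have := hc.tendsto
      norm_num at this
      convert this using 2
    have t2 : Tendsto (fun x : ℝ => (1 - x) * Real.log (1 - x)) (𝓝 (1:ℝ)) (𝓝 0) := by
      have hc : Tendsto (fun x : ℝ => 1 - x) (𝓝 (1:ℝ)) (𝓝 0) := by
        have : Continuous (fun x : ℝ => 1 - x) := by fun_prop
        simpa using this.tendsto 1
      have := (Real.continuous_mul_log.tendsto 0).comp hc
      simpa [Function.comp_def] using this
    have := (t1.add t2).mono_left (nhdsWithin_le_nhds : 𝓝[<] (1:ℝ) ≤ 𝓝 1)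
    simpa using this
  exact tendsto_nhds_unique h_dom h_cont

/-- Key inequality: for `x ∈ [0,1)`. -/
lemma key_ineq {x : ℝ} (h0 : 0 ≤ x) (h1 : x < 1) :
    (1 + x) * Real.log (1 + x) + (1 - x) * Real.log (1 - x)
      ≤ x ^ 2 + (2 * Real.log 2 - 1) * x ^ 4 := by
  have hx : |x| < 1 := abs_lt.mpr ⟨by linarith, h1⟩
  have hA := hasSum_myF hx
  have hB := hasSum_myB
  have hA' : (1 + x) * Real.log (1 + x) + (1 - x) * Real.log (1 - x)
      = x ^ 2 + ∑' n : ℕ, x ^ (2 * (n + 1) + 2) * myB (n + 1) := by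
    rw [← hA.tsum_eq, hA.summable.tsum_eq_zero_add]
    norm_num [myB]
  have hB' : (2 : ℝ) * Real.log 2 = 1 + ∑' n : ℕ, myB (n + 1) := by
    rw [← hB.tsum_eq, hB.summable.tsum_eq_zero_add]
    norm_num [myB]
  have hsum_le : ∑' n : ℕ, x ^ (2 * (n + 1) + 2) * myB (n + 1)
      ≤ ∑' n : ℕ, x ^ 4 * myB (n + 1) := by
    refine ((summable_nat_add_iff 1).mpr hA.summable).tsum_le_tsum (fun n => ?_)
      (((summable_nat_add_iff 1).mpr hB.summable).mul_left _)
    have : x ^ (2 * (n + 1) + 2) ≤ x ^ 4 := pow_le_pow_of_le_one h0 h1.le (by omega)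
    exact mul_le_mul_of_nonneg_right this (myB_pos _).le
  have htail : ∑' n : ℕ, x ^ 4 * myB (n + 1) = x ^ 4 * (2 * Real.log 2 - 1) := by
    rw [tsum_mul_left]
    have : ∑' n : ℕ, myB (n + 1) = 2 * Real.log 2 - 1 := by linarith [hB'.symm]
    rw [this]
  nlinarith [hsum_le, htail, hA']

theorem stmt_1 (x : ℝ) (h0 : 0 ≤ x) (h1 : x ≤ 1) :
    1 - binEnt ((1 - x) / 2) ≤ x ^ 2 / (2 * Real.log 2) + (1 - 1 / (2 * Real.log 2)) * x ^ 4 := by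
  have hL : (0:ℝ) < Real.log 2 := Real.log_pos one_lt_two
  rcases eq_or_lt_of_le h1 with rfl | hx1
  · have hb : binEnt ((1 - 1) / 2) = 0 := by norm_num [binEnt]
    have he : (1:ℝ) ^ 2 / (2 * Real.log 2) + (1 - 1 / (2 * Real.log 2)) * 1 ^ 4 = 1 := by
      field_simp
      ring
    rw [hb, he]
    norm_num
  · -- x < 1
    have hx2 : 0 < 1 - x := by linarith
    have hx3 : 0 < 1 + x := by linarith
    have hent : 1 - binEnt ((1 - x) / 2)
        = ((1 + x) * Real.log (1 + x) + (1 - x) * Real.log (1 - x)) / (2 * Real.log 2) := by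
      have e2 : 1 - (1 - x) / 2 = (1 + x) / 2 := by ring
      rw [binEnt, e2, Real.logb, Real.logb,
        Real.log_div hx2.ne' two_ne_zero, Real.log_div hx3.ne' two_ne_zero]
      field_simp
      ring
    have hrhs : x ^ 2 / (2 * Real.log 2) + (1 - 1 / (2 * Real.log 2)) * x ^ 4
        = (x ^ 2 + (2 * Real.log 2 - 1) * x ^ 4) / (2 * Real.log 2) := by
      field_simp
    rw [hent, hrhs]
    exact div_le_div_of_nonneg_right (key_ineq h0 hx1) (by positivity)
end

section
/- For 0 ≤ ε ≤ 1/2 and λ = (1−2ε)², one has 1 − H(ε) = (1/ln 2)·Σ_{k=1}^∞ λ^k/(2k(2k−1)), where H is the binary entropy function. -/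
open Real Filter Set Topology

lemma hasSum_aux {x : ℝ} (hx : |x| < 1) :
    HasSum (fun k : ℕ => (x ^ 2) ^ (k + 1) / ((2 * ((k : ℝ) + 1)) * (2 * ((k : ℝ) + 1) - 1)))
      ((1 + x) / 2 * Real.log (1 + x) + (1 - x) / 2 * Real.log (1 - x)) := by
  have hx2 : |x ^ 2| < 1 := by
    rw [abs_pow]
    nlinarith [abs_nonneg x]
  have A := (hasSum_log_sub_log_of_abs_lt_one hx).mul_left (x / 2)
  have B := (hasSum_pow_div_log_of_abs_lt_one hx2).mul_left (1 / 2)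
  have C := A.sub B
  have h1x : (0:ℝ) < 1 - x := by cases' abs_lt.mp hx with h h; linarith
  have h1x' : (0:ℝ) < 1 + x := by cases' abs_lt.mp hx with h h; linarith
  convert C using 1
  · rfl
  · funext k
    have hpow : (x ^ 2) ^ (k + 1) = x * x ^ (2 * k + 1) := by
      rw [← pow_mul, ← pow_succ']
      ring_nf
    have hsub : 2 * ((k : ℝ) + 1) - 1 = 2 * (k : ℝ) + 1 := by ring
    rw [hpow, hsub]
    have hk1 : (2 * (k : ℝ) + 1) ≠ 0 := by positivity
    have hk2 : ((k : ℝ) + 1) ≠ 0 := by positivity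
    field_simp
    ring
  · have h : (1:ℝ) - x ^ 2 = (1 + x) * (1 - x) := by ring
    rw [h, Real.log_mul (by positivity) (by positivity)]
    ring

lemma hasSum_eps {ε : ℝ} (h0 : 0 < ε) (h1 : ε < 1) :
    HasSum (fun k : ℕ =>
        ((1 - 2 * ε) ^ 2) ^ (k + 1) / ((2 * ((k : ℝ) + 1)) * (2 * ((k : ℝ) + 1) - 1)))
      (Real.log 2 + ε * Real.log ε + (1 - ε) * Real.log (1 - ε)) := by
  have hx : |1 - 2 * ε| < 1 := by
    rw [abs_lt]; constructor <;> linarith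
  have H := hasSum_aux hx
  have e1 : 1 + (1 - 2 * ε) = 2 * (1 - ε) := by ring
  have e2 : 1 - (1 - 2 * ε) = 2 * ε := by ring
  rw [e1, e2, Real.log_mul two_ne_zero (by linarith), Real.log_mul two_ne_zero (by linarith)] at H
  convert H using 1
  ring

noncomputable def gAux (t : ℝ) : ℝ :=
  ∑' k : ℕ, (min (max t 0) 1) ^ (k + 1) / ((2 * ((k : ℝ) + 1)) * (2 * ((k : ℝ) + 1) - 1))

lemma gAux_cont : Continuous gAux := by
  apply continuous_tsum
    (u := fun k : ℕ => 1 / ((2 * (k : ℝ) + 2) * (2 * (k : ℝ) + 1)))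
    (f := fun k t => (min (max t 0) 1) ^ (k + 1) / ((2 * ((k : ℝ) + 1)) * (2 * ((k : ℝ) + 1) - 1)))
  · intro k
    exact (((continuous_id.max continuous_const).min continuous_const).pow _).div_const _
  · have hs : Summable (fun k : ℕ => 1 / ((k : ℝ) + 1) ^ 2) := by
      have h := Real.summable_one_div_nat_pow.mpr (by norm_num : 1 < 2)
      have := (summable_nat_add_iff 1).mpr h
      convert this using 2 with k
      rfl
      push_cast
      ring
    apply Summable.of_nonneg_of_le (fun k => by positivity) _ hs
    intro k
    rw [div_le_div_iff₀ (by positivity) (by positivity)]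
    nlinarith [sq_nonneg ((k : ℝ))]
  · intro k t
    have hsub : 2 * ((k : ℝ) + 1) * (2 * ((k : ℝ) + 1) - 1) = (2 * (k : ℝ) + 2) * (2 * (k : ℝ) + 1) := by ring
    rw [hsub]
    have hm0 : 0 ≤ min (max t 0) 1 := le_min (le_max_right _ _) one_pos.le
    have hm1 : min (max t 0) 1 ≤ 1 := min_le_right _ _
    rw [Real.norm_eq_abs, abs_div, abs_of_nonneg (by positivity), abs_of_nonneg (by positivity)]
    gcongr
    exact pow_le_one₀ hm0 hm1

lemma gAux_eq {t : ℝ} (h0 : 0 ≤ t) (h1 : t ≤ 1) :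
    gAux t = ∑' k : ℕ, t ^ (k + 1) / ((2 * ((k : ℝ) + 1)) * (2 * ((k : ℝ) + 1) - 1)) := by
  unfold gAux
  rw [max_eq_left h0, min_eq_left h1]

lemma gAux_one : gAux 1 = Real.log 2 := by
  set F : ℝ → ℝ := fun ε => gAux ((1 - 2 * ε) ^ 2) with hF
  set W : ℝ → ℝ := fun ε => Real.log 2 + ε * Real.log ε + (1 - ε) * Real.log (1 - ε) with hW
  have hFc : Continuous F := gAux_cont.comp (by continuity)
  have hWc : Continuous W := by
    have h1 : Continuous fun x : ℝ => x * Real.log x := Real.continuous_mul_log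
    have h2 : Continuous fun x : ℝ => (1 - x) * Real.log (1 - x) :=
      h1.comp (continuous_const.sub continuous_id)
    exact (continuous_const.add h1).add h2
  have hEq : ∀ ε ∈ Ioo (0:ℝ) 1, F ε = W ε := by
    intro ε hε
    have hx2 : (0:ℝ) ≤ (1 - 2 * ε) ^ 2 := sq_nonneg _
    have hx2' : (1 - 2 * ε) ^ 2 ≤ 1 := by nlinarith [hε.1, hε.2]
    show gAux ((1 - 2 * ε) ^ 2) = W ε
    rw [gAux_eq hx2 hx2', (hasSum_eps hε.1 hε.2).tsum_eq]
  have hne : (𝓝[Ioo (0:ℝ) 1] 0).NeBot := by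
    apply mem_closure_iff_nhdsWithin_neBot.mp
    rw [closure_Ioo (by norm_num : (0:ℝ) ≠ 1)]
    exact ⟨le_refl 0, by norm_num⟩
  have t1 : Tendsto F (𝓝[Ioo (0:ℝ) 1] 0) (𝓝 (F 0)) :=
    (hFc.continuousAt).continuousWithinAt
  have t2 : Tendsto F (𝓝[Ioo (0:ℝ) 1] 0) (𝓝 (W 0)) := by
    apply Tendsto.congr' _ (hWc.continuousAt.continuousWithinAt)
    filter_upwards [self_mem_nhdsWithin] with x hx
    exact (hEq x hx).symm
  have : F 0 = W 0 := tendsto_nhds_unique t1 t2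
  have hF0 : F 0 = gAux 1 := by simp only [hF]; norm_num
  have hW0 : W 0 = Real.log 2 := by norm_num [hW]
  rw [← hF0, this, hW0]

theorem stmt_2 (ε : ℝ) (h0 : 0 ≤ ε) (h1 : ε ≤ 1/2) :
    1 - binEnt ε
      = (1 / Real.log 2) *
          ∑' k : ℕ, ((1 - 2 * ε) ^ 2) ^ (k + 1) / ((2 * ((k : ℝ) + 1)) * (2 * ((k : ℝ) + 1) - 1)) := by
  have hl2 : Real.log 2 ≠ 0 := (Real.log_pos one_lt_two).ne'
  rcases eq_or_lt_of_le h0 with rfl | hpos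
  · have hsum : (∑' k : ℕ, ((1 - 2 * (0:ℝ)) ^ 2) ^ (k + 1)
        / ((2 * ((k : ℝ) + 1)) * (2 * ((k : ℝ) + 1) - 1))) = Real.log 2 := by
      rw [← gAux_one, gAux_eq zero_le_one le_rfl]
      norm_num
    rw [hsum]
    simp [binEnt, Real.logb, hl2]
  · have hsum := (hasSum_eps hpos (by linarith)).tsum_eq
    rw [hsum]
    simp only [binEnt, Real.logb]
    field_simp
    ring
end
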